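/- Let A be a magma and let B₁, …, B_n be finitely many isolated subsets of A such that no B_i contains the union of all the others. Then ⋃_{i=1}^{n} B_i is not closed under the operation of A. -/
import Mathlib


def Isolated {A : Type*} (op : A → A → A) (B : Set A) : Prop :=
  (∀ a b : A, a ∈ B → b ∈ B → op a b ∈ B) ∧
  (∀ a b : A, (a ∉ B ∨ b ∉ B) → op a b ∉ B)

/-- the union of finitely many isolated subsets, none of which
contains the union of all the others, is not closed under the operation. -/
theorem stmt_5 {A : Type*} (op : A → A → A) (n : ℕ) (hn : 0 < n)
    (B : Fin n → Set A) (hB : ∀ i, Isolated op (B i))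
    (hmax : ∀ i : Fin n, ¬ (⋃ j, ⋃ (_ : j ≠ i), B j) ⊆ B i) :
    ¬ ∀ a ∈ ⋃ i, B i, ∀ b ∈ ⋃ i, B i, op a b ∈ ⋃ i, B i := by
  intro hcl
  -- For each i, choose x i in the union with x i ∉ B i
  have hx : ∀ i : Fin n, ∃ x, x ∈ (⋃ j, B j) ∧ x ∉ B i := by
    intro i
    obtain ⟨x, hxU, hxB⟩ := Set.not_subset.mp (hmax i)
    refine ⟨x, ?_, hxB⟩
    simp only [Set.mem_iUnion] at hxU ⊢
    obtain ⟨j, _, hj⟩ := hxU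
    exact ⟨j, hj⟩
  choose x hxU hxB using hx
  -- Build an element in the union avoiding all B m with m ≤ k
  have claim : ∀ k : ℕ, ∃ y ∈ ⋃ i, B i, ∀ m : Fin n, (m : ℕ) ≤ k → y ∉ B m := by
    intro k
    induction k with
    | zero =>
      refine ⟨x ⟨0, hn⟩, hxU _, ?_⟩
      intro m hm
      have : m = ⟨0, hn⟩ := Fin.ext (Nat.le_zero.mp hm)
      rw [this]; exact hxB _
    | succ k ih =>
      obtain ⟨y, hyU, hy⟩ := ih
      by_cases h : k + 1 < n
      · refine ⟨op y (x ⟨k + 1, h⟩), hcl y hyU _ (hxU _), ?_⟩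
        intro m hm
        rcases Nat.lt_or_ge (m : ℕ) (k + 1) with h' | h'
        · exact (hB m).2 _ _ (Or.inl (hy m (Nat.lt_succ_iff.mp h')))
        · have : m = ⟨k + 1, h⟩ := Fin.ext (le_antisymm hm h')
          exact (hB m).2 _ _ (Or.inr (this ▸ hxB ⟨k + 1, h⟩))
      · refine ⟨y, hyU, fun m _ => hy m ?_⟩
        exact Nat.lt_succ_iff.mp (lt_of_lt_of_le m.isLt (Nat.not_lt.mp h))
  obtain ⟨y, hyU, hy⟩ := claim (n - 1)
  obtain ⟨i, hi⟩ := Set.mem_iUnion.mp hyU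
  exact hy i (Nat.le_pred_of_lt i.isLt) hi
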